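/- Every tropical polyhedron with mixed constraints is a tropically convex subset of ℝmaxⁿ; in particular, the solution set in ℝmaxⁿ of any single mixed tropical affine inequality is tropically convex. -/

import Mathlib

attribute [local instance] Classical.propDecidable

/-- The germ semiring `𝔾 = ℝmax ∪ {+∞} ∪ ℝ⁻`: `negInf` is `-∞`, `fin a` is the
real number `a` (an element of `ℝmax`), `germ a` is the germ `a̲ ∈ ℝ⁻`, and
`posInf` is `+∞`. -/
inductive TGerm where
  | negInf : TGerm
  | fin : ℝ → TGerm
  | germ : ℝ → TGerm
  | posInf : TGerm

namespace TGerm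

/-- The modulus `|x| ∈ ℝmax ∪ {+∞} = EReal` of an element of `𝔾`. -/
noncomputable def modulus : TGerm → EReal
  | negInf => ⊥
  | fin a => (a : EReal)
  | germ a => (a : EReal)
  | posInf => ⊤

/-- Whether `x` belongs to the copy `ℝ⁻` of perturbed reals. -/
def isPert : TGerm → Bool
  | germ _ => true
  | _ => false

/-- The total order `≤𝔾` on `𝔾`: `x ≤𝔾 y` iff `|x| < |y|` when
`x ∈ ℝmax ∪ {+∞}` and `y ∈ ℝ⁻`, and `|x| ≤ |y|` otherwise. -/
def gle (x y : TGerm) : Prop :=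
  if isPert x = false ∧ isPert y = true then modulus x < modulus y
  else modulus x ≤ modulus y

/-- The valuation `x(ε) ∈ ℝmax ∪ {+∞} = EReal` of `x ∈ 𝔾` at `ε`. -/
noncomputable def val : TGerm → ℝ → EReal
  | negInf, _ => ⊥
  | fin a, _ => (a : EReal)
  | germ a, ε => ((a - ε : ℝ) : EReal)
  | posInf, _ => ⊤

/-- The addition `⊕` of `𝔾`: the maximum with respect to `≤𝔾`. -/
noncomputable def add (x y : TGerm) : TGerm := if gle x y then y else x

/-- The minimum with respect to `≤𝔾`. -/
noncomputable def gmin (x y : TGerm) : TGerm := if gle x y then x else y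

/-- The tropical sum `⊕ᵢ f i` of a finite family in `𝔾`. -/
noncomputable def gsum {n : ℕ} (f : Fin n → TGerm) : TGerm :=
  (List.ofFn f).foldr add negInf

/-- The minimum (w.r.t. `≤𝔾`) of a finite family in `𝔾`. -/
noncomputable def ginf {n : ℕ} (f : Fin n → TGerm) : TGerm :=
  (List.ofFn f).foldr gmin posInf

/-- The multiplication `⊗` of `𝔾`. -/
def mul : TGerm → TGerm → TGerm
  | negInf, _ => negInf
  | _, negInf => negInf
  | posInf, _ => posInf
  | _, posInf => posInf
  | fin a, fin b => fin (a + b)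
  | fin a, germ b => germ (a + b)
  | germ a, fin b => germ (a + b)
  | germ a, germ b => germ (a + b)

end TGerm

/-- The embedding of `ℝmax = ℝ ∪ {-∞}` into the germ semiring `𝔾`. -/
def toGerm (x : WithBot ℝ) : TGerm := WithBot.recBotCoe TGerm.negInf TGerm.fin x

/-- The embedding of `ℝmax = ℝ ∪ {-∞}` into `ℝmax ∪ {+∞} = EReal`. -/
noncomputable def rmaxToEReal (x : WithBot ℝ) : EReal :=
  WithBot.recBotCoe ⊥ (fun a : ℝ => (a : EReal)) x

/-- A point `x ∈ ℝmaxⁿ` satisfies the mixed tropical affine inequality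
`a₀ ⊕ a₁x₁ ⊕ ⋯ ⊕ aₙxₙ ≤𝔾 b₀ ⊕ b₁x₁ ⊕ ⋯ ⊕ bₙxₙ`. -/
noncomputable def SatisfiesMixed {n : ℕ} (a₀ : WithBot ℝ) (a : Fin n → WithBot ℝ)
    (b₀ : TGerm) (b : Fin n → TGerm) (x : Fin n → WithBot ℝ) : Prop :=
  (TGerm.add (toGerm a₀) (TGerm.gsum fun i => (toGerm (a i)).mul (toGerm (x i)))).gle
    (TGerm.add b₀ (TGerm.gsum fun i => (b i).mul (toGerm (x i))))

/-- A subset of `ℝmaxⁿ` is tropically convex. -/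
def TropConvex {n : ℕ} (C : Set (Fin n → WithBot ℝ)) : Prop :=
  ∀ u ∈ C, ∀ v ∈ C, ∀ lam mu : WithBot ℝ, max lam mu = 0 →
    (fun i => max (lam + u i) (mu + v i)) ∈ C

namespace TGerm

def rank (x : TGerm) : ℕ := if isPert x then 0 else 1

noncomputable def key (x : TGerm) : EReal ×ₗ ℕ := toLex (modulus x, rank x)

lemma gle_iff_key (x y : TGerm) : gle x y ↔ key x ≤ key y := by
  unfold gle key
  rw [Prod.Lex.le_iff]
  split_ifs with h
  · obtain ⟨hx, hy⟩ := h
    simp [rank, hx, hy]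
  · have hr : rank x ≤ rank y := by
      unfold rank
      cases hx : isPert x <;> cases hy : isPert y <;> simp_all
    constructor
    · intro hle
      rcases lt_or_eq_of_le hle with h' | h'
      · exact Or.inl h'
      · exact Or.inr ⟨h', hr⟩
    · rintro (h' | ⟨h', -⟩)
      · exact h'.le
      · exact h'.le

lemma gle_refl (x : TGerm) : gle x x := (gle_iff_key x x).2 le_rfl

lemma gle_trans {x y z : TGerm} (h1 : gle x y) (h2 : gle y z) : gle x z :=
  (gle_iff_key x z).2 (((gle_iff_key x y).1 h1).trans ((gle_iff_key y z).1 h2))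

lemma gle_total (x y : TGerm) : gle x y ∨ gle y x := by
  rcases le_total (key x) (key y) with h | h
  · exact Or.inl ((gle_iff_key x y).2 h)
  · exact Or.inr ((gle_iff_key y x).2 h)

lemma negInf_le (y : TGerm) : gle negInf y := by
  cases y <;> simp [gle, isPert, modulus]

lemma le_add_left (x y : TGerm) : gle x (add x y) := by
  unfold add; split_ifs with h
  · exact h
  · exact gle_refl x

lemma le_add_right (x y : TGerm) : gle y (add x y) := by
  unfold add; split_ifs with h
  · exact gle_refl y
  · rcases gle_total y x with h' | h'
    · exact h'
    · exact absurd h' h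

lemma add_le {x y z : TGerm} (h1 : gle x z) (h2 : gle y z) : gle (add x y) z := by
  unfold add; split_ifs <;> assumption

lemma mul_negInf (c : TGerm) : mul c negInf = negInf := by cases c <;> rfl

lemma mul_left_comm' (a b x : TGerm) : mul a (mul b x) = mul b (mul a x) := by
  cases a <;> cases b <;> cases x <;> simp [mul] <;> ring

lemma mul_mono {x y : TGerm} (c : TGerm) (h : gle x y) : gle (mul c x) (mul c y) := by
  cases c <;> cases x <;> cases y <;>
    simp_all [mul, gle, isPert, modulus, EReal.coe_le_coe_iff, EReal.coe_lt_coe_iff] <;>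
    norm_cast <;> linarith

lemma mul_add_le {c x y z : TGerm} (h1 : gle (mul c x) z) (h2 : gle (mul c y) z) :
    gle (mul c (add x y)) z := by
  unfold add; split_ifs <;> assumption

lemma foldr_le {l : List TGerm} {z : TGerm} (h : ∀ x ∈ l, gle x z) :
    gle (l.foldr add negInf) z := by
  induction l with
  | nil => exact negInf_le z
  | cons a l ih =>
    exact add_le (h a List.mem_cons_self) (ih fun x hx => h x (List.mem_cons_of_mem a hx))

lemma mem_le_foldr {l : List TGerm} {x : TGerm} (h : x ∈ l) : gle x (l.foldr add negInf) := by
  induction l with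
  | nil => simp at h
  | cons a l ih =>
    rcases List.mem_cons.1 h with rfl | h'
    · exact le_add_left _ _
    · exact gle_trans (ih h') (le_add_right _ _)

lemma mul_foldr_le {c z : TGerm} {l : List TGerm} (h : ∀ x ∈ l, gle (mul c x) z) :
    gle (mul c (l.foldr add negInf)) z := by
  induction l with
  | nil => simpa [mul_negInf] using negInf_le z
  | cons a l ih =>
    simp only [List.foldr_cons]
    exact mul_add_le (h a List.mem_cons_self) (ih fun x hx => h x (List.mem_cons_of_mem a hx))

lemma le_gsum {n : ℕ} (f : Fin n → TGerm) (i : Fin n) : gle (f i) (gsum f) :=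
  mem_le_foldr (by simp [List.mem_ofFn])

lemma gsum_le {n : ℕ} {f : Fin n → TGerm} {z : TGerm} (h : ∀ i, gle (f i) z) :
    gle (gsum f) z := by
  refine foldr_le fun x hx => ?_
  obtain ⟨i, rfl⟩ := List.mem_ofFn.1 hx
  exact h i

lemma mul_gsum_le {n : ℕ} {c z : TGerm} {f : Fin n → TGerm} (h : ∀ i, gle (mul c (f i)) z) :
    gle (mul c (gsum f)) z := by
  refine mul_foldr_le fun x hx => ?_
  obtain ⟨i, rfl⟩ := List.mem_ofFn.1 hx
  exact h i

lemma zero_mul' (z : TGerm) : mul (toGerm (0 : WithBot ℝ)) z = z := by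
  have : toGerm (0 : WithBot ℝ) = fin 0 := rfl
  rw [this]; cases z <;> simp [mul]

lemma mul_le_self {lam : WithBot ℝ} (h : lam ≤ 0) (z : TGerm) :
    gle (mul (toGerm lam) z) z := by
  induction lam using WithBot.recBotCoe with
  | bot =>
    have : toGerm (⊥ : WithBot ℝ) = negInf := rfl
    rw [this]
    cases z <;> exact negInf_le _
  | coe r =>
    have hr : r ≤ 0 := by exact_mod_cast h
    have : toGerm ((r : WithBot ℝ)) = fin r := rfl
    rw [this]
    cases z <;> simp [mul, gle, isPert, modulus, EReal.coe_le_coe_iff] <;> norm_cast <;> linarith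

lemma toGerm_bot : toGerm (⊥ : WithBot ℝ) = negInf := rfl

lemma toGerm_coe (a : ℝ) : toGerm ((a : ℝ) : WithBot ℝ) = fin a := rfl

lemma gle_fin_fin {a b : ℝ} : gle (fin a) (fin b) ↔ a ≤ b := by
  simp [gle, isPert, modulus, EReal.coe_le_coe_iff]

lemma toGerm_max (s t : WithBot ℝ) : toGerm (max s t) = add (toGerm s) (toGerm t) := by
  rcases s with _ | a
  · show toGerm (max (⊥ : WithBot ℝ) t) = add negInf (toGerm t)
    rw [max_eq_right bot_le, add, if_pos (negInf_le _)]
  · rcases t with _ | b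
    · show toGerm (max ((a : ℝ) : WithBot ℝ) ⊥) = add (fin a) negInf
      rw [max_eq_left bot_le, add, if_neg]
      · rfl
      · simp [gle, isPert, modulus]
    · show toGerm (max ((a : ℝ) : WithBot ℝ) ((b : ℝ) : WithBot ℝ)) = add (fin a) (fin b)
      rw [← WithBot.coe_max]
      rcases le_total a b with h | h
      · rw [max_eq_right h, add, if_pos (gle_fin_fin.2 h)]; rfl
      · rw [max_eq_left h]
        by_cases hg : gle (fin a) (fin b)
        · have : a = b := le_antisymm (gle_fin_fin.1 hg) h
          rw [add, if_pos hg, this]; rfl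
        · rw [add, if_neg hg]; rfl

lemma toGerm_add (s t : WithBot ℝ) : toGerm (s + t) = mul (toGerm s) (toGerm t) := by
  rcases s with _ | a
  · show toGerm ((⊥ : WithBot ℝ) + t) = mul negInf (toGerm t)
    rw [WithBot.bot_add]
    rcases t with _ | b <;> rfl
  · rcases t with _ | b
    · show toGerm (((a : ℝ) : WithBot ℝ) + ⊥) = mul (fin a) negInf
      rw [WithBot.add_bot]; rfl
    · show toGerm (((a : ℝ) : WithBot ℝ) + ((b : ℝ) : WithBot ℝ)) = mul (fin a) (fin b)
      rw [← WithBot.coe_add]; rfl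

end TGerm

open TGerm in
lemma satisfiesMixed_convex {n : ℕ} (a₀ : WithBot ℝ) (a : Fin n → WithBot ℝ) (b₀ : TGerm)
    (b : Fin n → TGerm) {u v : Fin n → WithBot ℝ} {lam mu : WithBot ℝ}
    (hmax : max lam mu = 0)
    (hu : SatisfiesMixed a₀ a b₀ b u) (hv : SatisfiesMixed a₀ a b₀ b v) :
    SatisfiesMixed a₀ a b₀ b (fun i => max (lam + u i) (mu + v i)) := by
  unfold SatisfiesMixed at *
  simp only [TGerm.mul] at *
  set lg := toGerm lam with hlg
  set mg := toGerm mu with hmg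
  set Lu := TGerm.add (toGerm a₀) (TGerm.gsum fun i => mul (toGerm (a i)) (toGerm (u i))) with hLu
  set Lv := TGerm.add (toGerm a₀) (TGerm.gsum fun i => mul (toGerm (a i)) (toGerm (v i))) with hLv
  set Ru := TGerm.add b₀ (TGerm.gsum fun i => mul (b i) (toGerm (u i))) with hRu
  set Rv := TGerm.add b₀ (TGerm.gsum fun i => mul (b i) (toGerm (v i))) with hRv
  have hlam0 : lam ≤ 0 := hmax ▸ le_max_left lam mu
  have hmu0 : mu ≤ 0 := hmax ▸ le_max_right lam mu
  have hcase : lam = 0 ∨ mu = 0 := by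
    rcases max_choice lam mu with h | h
    · exact Or.inl (h ▸ hmax)
    · exact Or.inr (h ▸ hmax)
  have hw : ∀ i, toGerm (max (lam + u i) (mu + v i)) =
      TGerm.add (mul lg (toGerm (u i))) (mul mg (toGerm (v i))) := by
    intro i
    rw [toGerm_max, toGerm_add, toGerm_add]
  have step1 : gle (TGerm.add (toGerm a₀)
      (TGerm.gsum fun i => mul (toGerm (a i)) (toGerm (max (lam + u i) (mu + v i)))))
      (TGerm.add (mul lg Lu) (mul mg Lv)) := by
    apply TGerm.add_le
    · rcases hcase with h0 | h0
      · have hz : mul lg Lu = Lu := by rw [hlg, h0, zero_mul']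
        have h1 : gle (toGerm a₀) (mul lg Lu) := by rw [hz, hLu]; exact TGerm.le_add_left _ _
        exact gle_trans h1 (TGerm.le_add_left _ _)
      · have hz : mul mg Lv = Lv := by rw [hmg, h0, zero_mul']
        have h1 : gle (toGerm a₀) (mul mg Lv) := by rw [hz, hLv]; exact TGerm.le_add_left _ _
        exact gle_trans h1 (TGerm.le_add_right _ _)
    · apply gsum_le; intro i
      rw [hw i]
      apply mul_add_le
      · rw [mul_left_comm']
        exact gle_trans (mul_mono lg (gle_trans
          (le_gsum (fun j => mul (toGerm (a j)) (toGerm (u j))) i) (TGerm.le_add_right _ _)))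
          (TGerm.le_add_left _ _)
      · rw [mul_left_comm']
        exact gle_trans (mul_mono mg (gle_trans
          (le_gsum (fun j => mul (toGerm (a j)) (toGerm (v j))) i) (TGerm.le_add_right _ _)))
          (TGerm.le_add_right _ _)
  have step2 : gle (TGerm.add (mul lg Lu) (mul mg Lv)) (TGerm.add (mul lg Ru) (mul mg Rv)) :=
    TGerm.add_le (gle_trans (mul_mono lg hu) (TGerm.le_add_left _ _))
      (gle_trans (mul_mono mg hv) (TGerm.le_add_right _ _))
  have step3 : gle (TGerm.add (mul lg Ru) (mul mg Rv))
      (TGerm.add b₀ (TGerm.gsum fun i => mul (b i) (toGerm (max (lam + u i) (mu + v i))))) := by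
    apply TGerm.add_le
    · rw [hRu]
      apply mul_add_le
      · exact gle_trans (mul_le_self hlam0 b₀) (TGerm.le_add_left _ _)
      · apply mul_gsum_le; intro i
        rw [mul_left_comm']
        refine gle_trans (mul_mono (b i) ?_)
          (gle_trans (le_gsum (fun j => mul (b j) (toGerm (max (lam + u j) (mu + v j)))) i)
            (TGerm.le_add_right _ _))
        rw [hw i]
        exact le_add_left _ _
    · rw [hRv]
      apply mul_add_le
      · exact gle_trans (mul_le_self hmu0 b₀) (TGerm.le_add_left _ _)
      · apply mul_gsum_le; intro i
        rw [mul_left_comm']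
        refine gle_trans (mul_mono (b i) ?_)
          (gle_trans (le_gsum (fun j => mul (b j) (toGerm (max (lam + u j) (mu + v j)))) i)
            (TGerm.le_add_right _ _))
        rw [hw i]
        exact le_add_right _ _
  exact gle_trans step1 (gle_trans step2 step3)

theorem statement_5 (n p : ℕ) (a₀ : Fin p → WithBot ℝ) (a : Fin p → Fin n → WithBot ℝ)
    (b₀ : Fin p → TGerm) (b : Fin p → Fin n → TGerm) :
    TropConvex { x | ∀ k : Fin p, SatisfiesMixed (a₀ k) (a k) (b₀ k) (b k) x } ∧
    ∀ (a₀' : WithBot ℝ) (a' : Fin n → WithBot ℝ) (b₀' : TGerm) (b' : Fin n → TGerm),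
      TropConvex { x | SatisfiesMixed a₀' a' b₀' b' x } := by
  constructor
  · intro u hu v hv lam mu hmax k
    exact satisfiesMixed_convex _ _ _ _ hmax (hu k) (hv k)
  · intro a₀' a' b₀' b' u hu v hv lam mu hmax
    exact satisfiesMixed_convex _ _ _ _ hmax hu hv
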